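/- If G is a nilpotent group and the centralizer of some finitely generated subgroup of G satisfies the maximal condition on subgroups (every subgroup is finitely generated), then G satisfies the maximal condition on subgroups. -/

import Mathlib

section Aux

variable {G : Type*} [Group G] {Q : Type*} [Group Q]

private lemma auxFGMap (f : G →* Q) {K : Subgroup G} (h : K.FG) : (K.map f).FG := by
  obtain ⟨S, hS⟩ := h
  exact (Subgroup.fg_iff _).2 ⟨f '' ↑S, by rw [← hS, MonoidHom.map_closure],
    S.finite_toSet.image f⟩

private lemma auxFGOfMapInj (f : G →* Q) (hf : Function.Injective f) {K : Subgroup G}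
    (h : (K.map f).FG) : K.FG := by
  rw [Subgroup.fg_iff_submonoid_fg] at h ⊢
  refine Submonoid.FG.map_injective f hf ?_
  convert h using 1
  rfl

private lemma auxFGOfKerOfMap (f : G →* Q) (K : Subgroup G)
    (h1 : (K ⊓ f.ker).FG) (h2 : (K.map f).FG) : K.FG := by
  obtain ⟨A, hA⟩ := h1
  obtain ⟨B, hB⟩ := h2
  have hBsub : ∀ b : Q, ∃ a, b ∈ B → a ∈ K ∧ f a = b := by
    intro b
    by_cases hb : b ∈ B
    · have hbm : b ∈ K.map f := hB ▸ Subgroup.subset_closure hb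
      obtain ⟨a, haK, hfa⟩ := Subgroup.mem_map.mp hbm
      exact ⟨a, fun _ => ⟨haK, hfa⟩⟩
    · exact ⟨1, fun h => absurd h hb⟩
  choose g hg using hBsub
  set u : Set G := g '' ↑B with hu
  have huK : u ⊆ (K : Set G) := by
    rintro x ⟨b, hb, rfl⟩
    exact (hg b hb).1
  have hufin : u.Finite := B.finite_toSet.image g
  have himg : f '' u = ↑B := by
    ext y
    constructor
    · rintro ⟨x, ⟨b, hb, rfl⟩, rfl⟩
      rw [(hg b hb).2]; exact hb
    · intro hy
      exact ⟨g y, ⟨y, hy, rfl⟩, (hg y hy).2⟩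
  refine (Subgroup.fg_iff _).2 ⟨↑A ∪ u, ?_, A.finite_toSet.union hufin⟩
  apply le_antisymm
  · rw [Subgroup.closure_le]
    refine Set.union_subset ?_ huK
    have h₁ : (A : Set G) ⊆ (Subgroup.closure (A : Set G) : Set G) := Subgroup.subset_closure
    rw [hA] at h₁
    exact h₁.trans (by exact_mod_cast inf_le_left)
  · intro k hk
    have hfk : f k ∈ (Subgroup.closure u).map f := by
      rw [MonoidHom.map_closure, himg, hB]
      exact ⟨k, hk, rfl⟩
    obtain ⟨j, hj, hjk⟩ := hfk
    have hjK : j ∈ K := (Subgroup.closure_le K).2 huK hj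
    have hkj : k * j⁻¹ ∈ K ⊓ f.ker := by
      refine Subgroup.mem_inf.mpr ⟨mul_mem hk (inv_mem hjK), ?_⟩
      rw [MonoidHom.mem_ker]
      simp [hjk]
    rw [← hA] at hkj
    have h1' : k * j⁻¹ ∈ Subgroup.closure (↑A ∪ u) :=
      Subgroup.closure_mono Set.subset_union_left hkj
    have h2' : j ∈ Subgroup.closure (↑A ∪ u) :=
      Subgroup.closure_mono Set.subset_union_right hj
    have := mul_mem h1' h2'
    simpa using this

private def AuxPred (G : Type*) [Group G] : Prop :=
  ∀ H : Subgroup G, H.FG → (∀ K : Subgroup (Subgroup.centralizer (H : Set G)), K.FG) →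
    ∀ K : Subgroup G, K.FG

private lemma auxMain (G : Type*) [Group G] [Group.IsNilpotent G] : AuxPred G := by
  refine nilpotent_center_quotient_ind (P := fun G _ _ => AuxPred G) G ?_ ?_
  · -- base case : trivial group
    intro G _ _ H _ _ K
    refine ⟨∅, ?_⟩
    rw [Finset.coe_empty, Subgroup.closure_empty]
    ext x
    have hx1 : x = 1 := Subsingleton.elim x 1
    simp only [Subgroup.mem_bot, hx1, true_iff]
    exact K.one_mem
  · -- inductive step
    intro G _ _ ih H hH hC K
    set Z := Subgroup.center G with hZdef
    set π := QuotientGroup.mk' Z with hπdef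
    have hπsurj : Function.Surjective π := QuotientGroup.mk'_surjective Z
    set C := Subgroup.centralizer (H : Set G) with hCdef
    have NC : ∀ B : Subgroup G, B ≤ C → B.FG := by
      intro B hB
      have h := auxFGMap C.subtype (hC (B.subgroupOf C))
      rwa [Subgroup.subgroupOf_map_subtype, inf_eq_left.2 hB] at h
    have hZC : Z ≤ C := Subgroup.center_le_centralizer _
    set Hbar := H.map π with hHbardef
    have hHbarfg : Hbar.FG := auxFGMap π hH
    set Cbar := Subgroup.centralizer (Hbar : Set (G ⧸ Z)) with hCbardef
    set D := Cbar.comap π with hDdef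
    -- commutators of elements of D with elements of H are central
    have hcomm : ∀ a : G, a ∈ H → ∀ d : G, d ∈ D → d * a * d⁻¹ * a⁻¹ ∈ Z := by
      intro a ha d hd
      have hmem : π a ∈ Hbar := Subgroup.mem_map.mpr ⟨a, ha, rfl⟩
      have hd' : π d ∈ Subgroup.centralizer (Hbar : Set (G ⧸ Z)) := Subgroup.mem_comap.mp hd
      have hcm : π a * π d = π d * π a := Subgroup.mem_centralizer_iff.mp hd' (π a) hmem
      have hker : π (d * a * d⁻¹ * a⁻¹) = 1 := by
        simp only [map_mul, map_inv]
        rw [← hcm]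
        group
      have hmk : d * a * d⁻¹ * a⁻¹ ∈ π.ker := MonoidHom.mem_ker.mpr hker
      rwa [hπdef, QuotientGroup.ker_mk'] at hmk
    -- key finset induction
    have key : ∀ T : Finset G, ↑T ⊆ (H : Set G) →
        (∀ B : Subgroup G, B ≤ D ⊓ Subgroup.centralizer ↑T → B.FG) →
        ∀ B : Subgroup G, B ≤ D → B.FG := by
      intro T
      classical
      induction T using Finset.induction_on with
      | empty =>
        intro _ hN B hB
        refine hN B (le_inf hB ?_)
        intro x _
        rw [Subgroup.mem_centralizer_iff]
        intro h hh
        simp at hh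
      | @insert a T ha ihT =>
        intro hsub hN
        have haH : a ∈ H := hsub (by simp)
        refine ihT (fun x hx => hsub (by simp [hx])) ?_
        intro B' hB'
        have hB'D : B' ≤ D := hB'.trans inf_le_left
        -- commutator-with-a homomorphism from D to Z
        set φ : D →* Z :=
          { toFun := fun d => ⟨(d : G) * a * (d : G)⁻¹ * a⁻¹, hcomm a haH d d.2⟩
            map_one' := by ext; simp
            map_mul' := by
              intro d e
              ext
              show ((d : G) * (e : G)) * a * ((d : G) * (e : G))⁻¹ * a⁻¹ =
                ((d : G) * a * (d : G)⁻¹ * a⁻¹) * ((e : G) * a * (e : G)⁻¹ * a⁻¹)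
              set z := (e : G) * a * (e : G)⁻¹ * a⁻¹ with hzdef
              have hzZ : z ∈ Z := hcomm a haH e e.2
              have hz' : ∀ g : G, g * z = z * g := fun g =>
                Subgroup.mem_center_iff.mp hzZ g
              have h1 : (e : G) * a * (e : G)⁻¹ = z * a := by
                rw [hzdef]; group
              have h2 : ((d : G) * (e : G)) * a * ((d : G) * (e : G))⁻¹ * a⁻¹ =
                  (d : G) * ((e : G) * a * (e : G)⁻¹) * (d : G)⁻¹ * a⁻¹ := by
                group
              rw [h2, h1]
              have h3 : (d : G) * (z * a) * (d : G)⁻¹ * a⁻¹ =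
                  (d : G) * z * (a * (d : G)⁻¹ * a⁻¹) := by group
              rw [h3, hz' (d : G), hz' ((d : G) * a * (d : G)⁻¹ * a⁻¹)]
              group } with hφdef
        set B'' := B'.subgroupOf D with hB''def
        have h1 : (B'' ⊓ φ.ker).FG := by
          refine auxFGOfMapInj D.subtype (Subgroup.subtype_injective _) ?_
          refine hN _ ?_
          rintro x ⟨y, hy, rfl⟩
          have hy' : y ∈ B'' ⊓ φ.ker := hy
          obtain ⟨hy1, hy2⟩ := Subgroup.mem_inf.mp hy'
          simp only [Subgroup.coe_subtype]
          refine Subgroup.mem_inf.mpr ⟨y.2, ?_⟩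
          rw [Subgroup.mem_centralizer_iff]
          intro h hh
          rw [Finset.coe_insert, Set.mem_insert_iff] at hh
          rcases hh with rfl | hhT
          · -- h = a : use that y is in the kernel of φ
            have hy2' : φ y = 1 := MonoidHom.mem_ker.mp hy2
            have hval : (y : G) * h * (y : G)⁻¹ * h⁻¹ = 1 := congrArg Subtype.val hy2'
            have h3 : (y : G) * h * (y : G)⁻¹ = h := by
              rwa [mul_inv_eq_one] at hval
            calc h * (y : G) = ((y : G) * h * (y : G)⁻¹) * (y : G) := by rw [h3]
              _ = (y : G) * h := by group
          · -- h ∈ T : use that y is in B'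
            have hyB' : (y : G) ∈ B' := Subgroup.mem_subgroupOf.mp hy1
            have hc := (hB'.trans inf_le_right) hyB'
            exact Subgroup.mem_centralizer_iff.mp hc h hhT
        have h2 : (B''.map φ).FG := by
          refine auxFGOfMapInj Z.subtype (Subgroup.subtype_injective _) ?_
          exact NC _ ((Subgroup.map_subtype_le _).trans hZC)
        have hB''fg : B''.FG := auxFGOfKerOfMap φ B'' h1 h2
        have heq : B''.map D.subtype = B' := by
          rw [hB''def, Subgroup.subgroupOf_map_subtype]
          exact inf_eq_left.mpr hB'D
        rw [← heq]
        exact auxFGMap _ hB''fg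
    -- subgroups of D are finitely generated
    have ND : ∀ B : Subgroup G, B ≤ D → B.FG := by
      obtain ⟨S, hS⟩ := hH
      refine key S ?_ ?_
      · intro x hx
        have hxc : x ∈ Subgroup.closure (↑S : Set G) := Subgroup.subset_closure hx
        rw [hS] at hxc
        exact hxc
      intro B hB
      refine NC B (le_trans (hB.trans inf_le_right) ?_)
      intro g hg
      rw [hCdef]
      rw [Subgroup.mem_centralizer_iff] at hg ⊢
      intro h hh
      have hh' : h ∈ Subgroup.closure (↑S : Set G) := by
        rw [hS]; exact hh
      exact Subgroup.closure_induction (fun x hx => hg x hx) (Commute.one_left g)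
        (fun x y _ _ hx hy => Commute.mul_left hx hy)
        (fun x _ hx => Commute.inv_left hx) hh'
    -- centralizer condition for the quotient
    have NCbar : ∀ Kb : Subgroup (G ⧸ Z), Kb ≤ Cbar → Kb.FG := by
      intro Kb hKb
      have heq : (Kb.comap π).map π = Kb := Subgroup.map_comap_eq_self_of_surjective hπsurj Kb
      rw [← heq]
      exact auxFGMap π (ND _ (Subgroup.comap_mono hKb))
    have hCbarAll : ∀ Kc : Subgroup (Subgroup.centralizer (Hbar : Set (G ⧸ Z))), Kc.FG := by
      intro Kc
      refine auxFGOfMapInj (Subgroup.centralizer (Hbar : Set (G ⧸ Z))).subtype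
        (Subgroup.subtype_injective _) ?_
      exact NCbar _ (Subgroup.map_subtype_le _)
    have NQ : ∀ Kb : Subgroup (G ⧸ Z), Kb.FG := ih Hbar hHbarfg hCbarAll
    -- conclude for K
    refine auxFGOfKerOfMap π K ?_ (NQ _)
    refine NC _ ?_
    rw [hπdef, QuotientGroup.ker_mk']
    exact le_trans inf_le_right hZC

end Aux

theorem max_condition_of_centralizer_max_condition {G : Type*} [Group G]
    [Group.IsNilpotent G] (H : Subgroup G) (hH : H.FG)
    (hC : ∀ K : Subgroup (Subgroup.centralizer (H : Set G)), K.FG) :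
    ∀ K : Subgroup G, K.FG := by
  exact auxMain G H hH hC
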